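/- Let P be a d-dimensional reflexive polytope and B a nonempty set of pairwise orthogonal roots of P. Then F := ∩_{b∈B} F_b is a nonempty face of P of codimension |B| (i.e., dim F = d − |B|), and the sum Σ_{b∈B} b of all elements of B is a lattice point lying in the relative interior of F. -/

import Mathlib

open Finset Set Pointwise

noncomputable section

/-- The standard pairing `⟨x, y⟩ = ∑ i, x i * y i` on `ℝ^d`. -/
def pairR {d : ℕ} (x y : Fin d → ℝ) : ℝ := ∑ i, x i * y i

/-- A point of `ℝ^d` is a lattice point if all its coordinates are integers. -/
def IsLatticePt {d : ℕ} (x : Fin d → ℝ) : Prop := ∀ i, ∃ n : ℤ, x i = (n : ℝ)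

/-- A lattice polytope: the convex hull of finitely many lattice points. -/
def IsLatticePolytope {d : ℕ} (P : Set (Fin d → ℝ)) : Prop :=
  ∃ V : Finset (Fin d → ℝ), (∀ x ∈ V, IsLatticePt x) ∧
    P = convexHull ℝ (V : Set (Fin d → ℝ))

/-- The dual polytope `P* = {y : ⟨x, y⟩ ≥ -1 for all x ∈ P}`. -/
def polarDual {d : ℕ} (P : Set (Fin d → ℝ)) : Set (Fin d → ℝ) :=
  {y | ∀ x ∈ P, -1 ≤ pairR x y}

/-- A reflexive polytope: a (full-dimensional) lattice polytope with `0` in its interior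
whose dual is again a lattice polytope. -/
def IsReflexive {d : ℕ} (P : Set (Fin d → ℝ)) : Prop :=
  IsLatticePolytope P ∧ (0 : Fin d → ℝ) ∈ interior P ∧ IsLatticePolytope (polarDual P)

/-- `F` is the facet of `P` with (unique) inner normal `η` normalized by `⟨η, F⟩ = -1`:
`F` is the part of `P` where the valid inequality `⟨η, ·⟩ ≥ -1` is tight, and `F` has
dimension `d - 1`. -/
def IsFacetNormal {d : ℕ} (P : Set (Fin d → ℝ)) (η : Fin d → ℝ)
    (F : Set (Fin d → ℝ)) : Prop :=
  (∀ x ∈ P, -1 ≤ pairR η x) ∧ F = {x ∈ P | pairR η x = -1} ∧ F.Nonempty ∧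
    Module.finrank ℝ (vectorSpan ℝ F) = d - 1

/-- `F` is a facet ((d-1)-dimensional face) of `P`. -/
def IsFacet {d : ℕ} (P F : Set (Fin d → ℝ)) : Prop := ∃ η, IsFacetNormal P η F

/-- A root of `P`: a lattice point in the relative interior of a facet of `P`. -/
def IsRoot {d : ℕ} (P : Set (Fin d → ℝ)) (m : Fin d → ℝ) : Prop :=
  IsLatticePt m ∧ ∃ F, IsFacet P F ∧ m ∈ intrinsicInterior ℝ F

/-- The facet `F_m` of `P` containing the root `m` in its relative interior
(for a root `m` there is exactly one such facet). -/
def rootFacet {d : ℕ} (P : Set (Fin d → ℝ)) (m : Fin d → ℝ) : Set (Fin d → ℝ) :=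
  ⋃₀ {F | IsFacet P F ∧ m ∈ intrinsicInterior ℝ F}

/-- The inner normal `η_m = η_{F_m}` of the facet of `P` containing the root `m`. -/
def rootNormal {d : ℕ} (P : Set (Fin d → ℝ)) (m : Fin d → ℝ) : Fin d → ℝ :=
  Classical.epsilon fun η => IsFacetNormal P η (rootFacet P m)

/-- The real extension of the `ℤ`-linear map on the lattice given by an integer matrix. -/
def intMatMap {d : ℕ} (A : Matrix (Fin d) (Fin d) ℤ) (x : Fin d → ℝ) : Fin d → ℝ :=
  (A.map (Int.cast : ℤ → ℝ)).mulVec x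

/-- `P` and `Q` are isomorphic as lattice polytopes: some `g ∈ GL_d(ℤ)` has real
extension mapping `P` onto `Q`. -/
def IsLatticeIso {d : ℕ} (P Q : Set (Fin d → ℝ)) : Prop :=
  ∃ A : Matrix (Fin d) (Fin d) ℤ, IsUnit A.det ∧ intMatMap A '' P = Q

end


section AuxStmt12

variable {d : ℕ}

lemma pairR_comm (x y : Fin d → ℝ) : pairR x y = pairR y x :=
  Finset.sum_congr rfl fun _ _ => mul_comm _ _

/-- `pairR g ·` as a linear map. -/
def pairLM (g : Fin d → ℝ) : (Fin d → ℝ) →ₗ[ℝ] ℝ where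
  toFun x := pairR g x
  map_add' x y := by unfold pairR; simp [mul_add, Finset.sum_add_distrib]
  map_smul' c x := by unfold pairR; simp [Finset.mul_sum, mul_left_comm]

@[simp] lemma pairLM_apply (g x : Fin d → ℝ) : pairLM g x = pairR g x := rfl

lemma pairR_add_right (g x y : Fin d → ℝ) : pairR g (x + y) = pairR g x + pairR g y :=
  (pairLM g).map_add x y

lemma pairR_smul_right (g : Fin d → ℝ) (c : ℝ) (x : Fin d → ℝ) :
    pairR g (c • x) = c * pairR g x := (pairLM g).map_smul c x

lemma pairR_smul_left (c : ℝ) (x y : Fin d → ℝ) :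
    pairR (c • x) y = c * pairR x y := by
  rw [pairR_comm, pairR_smul_right, pairR_comm]

lemma pairR_sub_right (g x y : Fin d → ℝ) : pairR g (x - y) = pairR g x - pairR g y :=
  (pairLM g).map_sub x y

lemma pairR_sum_right {X : Type*} (g : Fin d → ℝ) (s : Finset X) (f : X → Fin d → ℝ) :
    pairR g (∑ b ∈ s, f b) = ∑ b ∈ s, pairR g (f b) := map_sum (pairLM g) f s

lemma pairR_neg_right (g x : Fin d → ℝ) : pairR g (-x) = -pairR g x :=
  (pairLM g).map_neg x

lemma pairR_neg_left (x y : Fin d → ℝ) : pairR (-x) y = -pairR x y := by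
  rw [pairR_comm, pairR_neg_right, pairR_comm]

lemma pairR_sum_left {X : Type*} (s : Finset X) (f : X → Fin d → ℝ) (x : Fin d → ℝ) :
    pairR (∑ b ∈ s, f b) x = ∑ b ∈ s, pairR (f b) x := by
  rw [pairR_comm, pairR_sum_right]
  exact Finset.sum_congr rfl fun b _ => pairR_comm _ _

@[simp] lemma pairR_zero_left (x : Fin d → ℝ) : pairR 0 x = 0 := by unfold pairR; simp

lemma pairR_single (g : Fin d → ℝ) (j : Fin d) :
    pairR g (fun i => if i = j then 1 else 0) = g j := by
  unfold pairR; rw [Finset.sum_eq_single j] <;> simp +contextual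

/-- A small multiple of a vector has small norm. -/
lemma small_smul_norm {E : Type*} [NormedAddCommGroup E] [NormedSpace ℝ E]
    (v : E) {ε : ℝ} (hε : 0 < ε) :
    ‖(ε / (2 * (‖v‖ + 1))) • v‖ < ε := by
  have hn : (0:ℝ) ≤ ‖v‖ := norm_nonneg _
  rw [norm_smul, Real.norm_eq_abs, abs_of_pos (by positivity)]
  rw [div_mul_eq_mul_div, div_lt_iff₀ (by positivity)]
  nlinarith

/-- A linear functional bounded below by `-1` on a set `C` and attaining `-1` at a point
of the intrinsic interior of `C` is identically `-1` on `C`. -/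
lemma tight_on_of_intrinsicInterior {C : Set (Fin d → ℝ)} {b : Fin d → ℝ}
    (hb : b ∈ intrinsicInterior ℝ C) (g : Fin d → ℝ)
    (hge : ∀ y ∈ C, -1 ≤ pairR g y) (hbeq : pairR g b = -1) :
    ∀ y ∈ C, pairR g y = -1 := by
  obtain ⟨b', hb', hbb⟩ := mem_intrinsicInterior.mp hb
  rw [mem_interior_iff_mem_nhds, Metric.mem_nhds_iff] at hb'
  obtain ⟨ε, hε, hballs⟩ := hb'
  intro y hy
  have hyA : y ∈ affineSpan ℝ C := subset_affineSpan ℝ C hy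
  have hbA : b ∈ affineSpan ℝ C := hbb ▸ b'.2
  set t : ℝ := ε / (2 * (‖b - y‖ + 1)) with ht
  have htpos : 0 < t := by positivity
  set z : Fin d → ℝ := t • (b - y) + b with hz
  have hzA : z ∈ affineSpan ℝ C := by
    have := AffineSubspace.smul_vsub_vadd_mem (affineSpan ℝ C) t hbA hyA hbA
    simpa [hz, vsub_eq_sub, vadd_eq_add] using this
  have hdist : dist z b < ε := by
    rw [dist_eq_norm]
    have h1 : z - b = t • (b - y) := by rw [hz]; abel
    rw [h1, ht]
    exact small_smul_norm (b - y) hε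
  have hzC : z ∈ C := by
    have hmem : (⟨z, hzA⟩ : affineSpan ℝ C) ∈ Metric.ball b' ε := by
      rw [Metric.mem_ball, Subtype.dist_eq]
      simpa [hbb] using hdist
    exact hballs hmem
  have hgz : -1 ≤ pairR g z := hge z hzC
  have hzexp : pairR g z = -1 + t * (-1 - pairR g y) := by
    rw [hz, pairR_add_right, pairR_smul_right, pairR_sub_right, hbeq]; ring
  have hgy := hge y hy
  nlinarith

/-- Membership in a closed convex set containing `0` follows from the inequalities given
by the vertices of the dual. -/
lemma mem_of_dual_vertices {P : Set (Fin d → ℝ)} (hconv : Convex ℝ P) (hcl : IsClosed P)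
    (h0 : (0 : Fin d → ℝ) ∈ P) (W : Finset (Fin d → ℝ))
    (hW : polarDual P = convexHull ℝ (W : Set (Fin d → ℝ)))
    (x : Fin d → ℝ) (hx : ∀ w ∈ W, -1 ≤ pairR w x) : x ∈ P := by
  by_contra hxP
  obtain ⟨f, u, hfP, hfx⟩ := geometric_hahn_banach_closed_point hconv hcl hxP
  have hu : 0 < u := by simpa using hfP 0 h0
  set g : Fin d → ℝ := fun i => f (fun j => if i = j then 1 else 0) with hg
  have hfg : ∀ y : Fin d → ℝ, f y = pairR y g := by
    intro y
    conv_lhs => rw [pi_eq_sum_univ y]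
    rw [map_sum]
    refine Finset.sum_congr rfl fun i _ => ?_
    rw [map_smul, smul_eq_mul]
  set w : Fin d → ℝ := (-u⁻¹) • g with hwdef
  have hpw : ∀ y : Fin d → ℝ, pairR y w = -u⁻¹ * f y := by
    intro y
    rw [hwdef, pairR_smul_right, ← hfg]
  have hwP : w ∈ polarDual P := by
    intro y hy
    have h1 : f y < u := hfP y hy
    rw [hpw y]
    nlinarith [mul_pos (inv_pos.2 hu) (sub_pos.2 h1), inv_mul_cancel₀ (ne_of_gt hu)]
  have hsub : convexHull ℝ (W : Set (Fin d → ℝ)) ⊆ {y : Fin d → ℝ | -1 ≤ pairR y x} := by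
    refine convexHull_min (fun w' hw' => ?_) ?_
    · exact hx w' hw'
    · refine convex_halfSpace_ge ⟨fun a b => ?_, fun c a => ?_⟩ (-1)
      · rw [pairR_comm, pairR_add_right, pairR_comm a x, pairR_comm b x]
      · rw [pairR_comm, pairR_smul_right, pairR_comm, smul_eq_mul]
  have hwx : -1 ≤ pairR w x := hsub (hW ▸ hwP)
  have hwx2 : pairR w x = -u⁻¹ * f x := by rw [pairR_comm, hpw x]
  rw [hwx2] at hwx
  nlinarith [mul_pos (inv_pos.2 hu) (sub_pos.2 hfx), inv_mul_cancel₀ (ne_of_gt hu)]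

/-- The facet of a root is well defined, `rootNormal` satisfies its defining property,
and the root lies in the intrinsic interior of `rootFacet`. -/
lemma rootFacet_spec {P : Set (Fin d → ℝ)} {b : Fin d → ℝ} (hb : IsRoot P b) :
    IsFacetNormal P (rootNormal P b) (rootFacet P b) ∧
      b ∈ intrinsicInterior ℝ (rootFacet P b) := by
  obtain ⟨-, F₀, hF₀, hrel⟩ := hb
  have key : ∀ F' η', IsFacetNormal P η' F' → b ∈ intrinsicInterior ℝ F' →
      ∀ F'' η'', IsFacetNormal P η'' F'' → b ∈ intrinsicInterior ℝ F'' → F'' ⊆ F' := by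
    intro F' η' hn' hrel' F'' η'' hn'' hrel''
    obtain ⟨hv', hFeq', -, -⟩ := hn'
    obtain ⟨hv'', hFeq'', -, -⟩ := hn''
    have h1 : pairR η' b = -1 := by
      have hbF' : b ∈ F' := intrinsicInterior_subset hrel'
      rw [hFeq'] at hbF'; exact hbF'.2
    have htight := tight_on_of_intrinsicInterior hrel'' η'
      (fun z hz => hv' z (by rw [hFeq''] at hz; exact hz.1)) h1
    intro y hy
    have hyP : y ∈ P := by rw [hFeq''] at hy; exact hy.1
    rw [hFeq']; exact ⟨hyP, htight y hy⟩
  obtain ⟨η₀, hη₀⟩ := hF₀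
  have hFeq : rootFacet P b = F₀ := by
    apply Set.Subset.antisymm
    · refine Set.sUnion_subset ?_
      rintro F' ⟨⟨η', hη'⟩, hrel'⟩
      exact key F₀ η₀ hη₀ hrel F' η' hη' hrel'
    · exact Set.subset_sUnion_of_mem ⟨⟨η₀, hη₀⟩, hrel⟩
  refine ⟨Classical.epsilon_spec (⟨η₀, ?_⟩ : ∃ η, IsFacetNormal P η (rootFacet P b)), ?_⟩
  · rw [hFeq]; exact hη₀
  · rw [hFeq]; exact hrel

/-- Any valid inequality that is tight at a point of the intrinsic interior of a facet
is the facet inequality. -/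
lemma normal_eq_of_tight {P F : Set (Fin d → ℝ)} {η b : Fin d → ℝ}
    (hη : IsFacetNormal P η F) (hrel : b ∈ intrinsicInterior ℝ F)
    (g : Fin d → ℝ) (hgv : ∀ x ∈ P, -1 ≤ pairR g x) (hgb : pairR g b = -1) :
    g = η := by
  obtain ⟨hv, hFeq, hFne, hdim⟩ := hη
  have hbF : b ∈ F := intrinsicInterior_subset hrel
  have hηb : pairR η b = -1 := by rw [hFeq] at hbF; exact hbF.2
  have hgF : ∀ y ∈ F, pairR g y = -1 :=
    tight_on_of_intrinsicInterior hrel g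
      (fun z hz => hgv z (by rw [hFeq] at hz; exact hz.1)) hgb
  have hηF : ∀ y ∈ F, pairR η y = -1 := fun y hy => by rw [hFeq] at hy; exact hy.2
  have hspan : ∀ h : Fin d → ℝ, (∀ y ∈ F, pairR h y = -1) →
      vectorSpan ℝ F ≤ LinearMap.ker (pairLM h) := by
    intro h hh
    rw [vectorSpan_def, Submodule.span_le]
    intro v hv'
    rw [Set.mem_vsub] at hv'
    obtain ⟨y, hy, z, hz, rfl⟩ := hv'
    have hyz : pairR h (y - z) = 0 := by rw [pairR_sub_right, hh y hy, hh z hz]; ring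
    simpa [LinearMap.mem_ker, vsub_eq_sub] using hyz
  have hrange : LinearMap.range (pairLM η) = ⊤ := by
    rw [Submodule.eq_top_iff']
    intro c
    refine ⟨(-c) • b, ?_⟩
    rw [pairLM_apply, pairR_smul_right, hηb]; ring
  have hr := LinearMap.finrank_range_add_finrank_ker (pairLM η)
  rw [hrange, finrank_top, Module.finrank_fin_fun, Module.finrank_self] at hr
  have hkerd : Module.finrank ℝ (LinearMap.ker (pairLM η)) = d - 1 := by omega
  have hVS : vectorSpan ℝ F = LinearMap.ker (pairLM η) :=
    Submodule.eq_of_le_of_finrank_eq (hspan η hηF) (by rw [hdim, hkerd])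
  have hpt : ∀ x, pairR g x = pairR η x := by
    intro x
    have h1 : pairR η (x + pairR η x • b) = 0 := by
      rw [pairR_add_right, pairR_smul_right, hηb]; ring
    have h2 : (x + pairR η x • b) ∈ vectorSpan ℝ F := by
      rw [hVS]; exact LinearMap.mem_ker.2 (by simpa using h1)
    have h3 : pairR g (x + pairR η x • b) = 0 := by
      have := hspan g hgF h2; simpa using this
    rw [pairR_add_right, pairR_smul_right, hgb] at h3
    linarith
  funext j
  have hj := hpt (fun i => if i = j then 1 else 0)
  rwa [pairR_single, pairR_single] at hj

lemma exists_int_sum {X : Type*} (s : Finset X) (g : X → ℝ) :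
    (∀ x ∈ s, ∃ n : ℤ, g x = n) → ∃ n : ℤ, ∑ x ∈ s, g x = n := by
  classical
  induction s using Finset.induction_on with
  | empty => exact fun _ => ⟨0, by simp⟩
  | @insert a s ha ih =>
    intro h
    obtain ⟨n, hn⟩ := h a (Finset.mem_insert_self a s)
    obtain ⟨m, hm⟩ := ih (fun x hx => h x (Finset.mem_insert_of_mem hx))
    exact ⟨n + m, by rw [Finset.sum_insert ha, hn, hm]; push_cast; ring⟩

lemma pairR_int {w b : Fin d → ℝ} (hw : IsLatticePt w) (hb : IsLatticePt b) :
    ∃ n : ℤ, pairR w b = n := by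
  refine exists_int_sum _ _ fun i _ => ?_
  obtain ⟨n, hn⟩ := hw i
  obtain ⟨m, hm⟩ := hb i
  exact ⟨n * m, by rw [hn, hm]; push_cast; ring⟩

lemma pairR_abs_le (w v : Fin d → ℝ) : |pairR w v| ≤ (d : ℝ) * ‖w‖ * ‖v‖ := by
  calc |pairR w v| ≤ ∑ i, |w i * v i| := Finset.abs_sum_le_sum_abs _ _
    _ ≤ ∑ _i : Fin d, ‖w‖ * ‖v‖ := by
        refine Finset.sum_le_sum fun i _ => ?_
        rw [abs_mul]
        have h1 : |w i| ≤ ‖w‖ := by rw [← Real.norm_eq_abs]; exact norm_le_pi_norm w i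
        have h2 : |v i| ≤ ‖v‖ := by rw [← Real.norm_eq_abs]; exact norm_le_pi_norm v i
        exact mul_le_mul h1 h2 (abs_nonneg _) (norm_nonneg _)
    _ = (d : ℝ) * ‖w‖ * ‖v‖ := by
        rw [Finset.sum_const, Finset.card_univ, Fintype.card_fin, nsmul_eq_mul]; ring

end AuxStmt12

/-- For a nonempty set `B` of pairwise orthogonal roots of a reflexive polytope `P`,
the intersection `F = ⋂_{b ∈ B} F_b` is a nonempty (exposed) face of `P` of codimension
`|B|`, and `∑_{b ∈ B} b` is a lattice point in the relative interior of `F`. -/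
theorem stmt12 {d : ℕ} (P : Set (Fin d → ℝ)) (hP : IsReflexive P)
    (B : Finset (Fin d → ℝ)) (hBne : B.Nonempty)
    (hBroot : ∀ b ∈ B, IsRoot P b)
    (horth : ∀ b ∈ B, ∀ b' ∈ B, b ≠ b' →
      pairR (rootNormal P b) b' = 0 ∧ pairR (rootNormal P b') b = 0) :
    (⋂ b ∈ B, rootFacet P b).Nonempty ∧
    IsExposed ℝ P (⋂ b ∈ B, rootFacet P b) ∧
    Module.finrank ℝ (vectorSpan ℝ (⋂ b ∈ B, rootFacet P b)) = d - B.card ∧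
    IsLatticePt (∑ b ∈ B, b) ∧
    (∑ b ∈ B, b) ∈ intrinsicInterior ℝ (⋂ b ∈ B, rootFacet P b) := by
  classical
  obtain ⟨⟨V, hVlat, hPdef⟩, h0int, ⟨W, hWlat, hWdef⟩⟩ := hP
  have hPconv : Convex ℝ P := hPdef ▸ convex_convexHull ℝ _
  have hPcl : IsClosed P := hPdef ▸ (V.finite_toSet.isCompact_convexHull ℝ).isClosed
  have h0P : (0 : Fin d → ℝ) ∈ P := interior_subset h0int
  have hmemD : ∀ x, (∀ w ∈ W, -1 ≤ pairR w x) → x ∈ P := fun x hx =>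
    mem_of_dual_vertices hPconv hPcl h0P W hWdef x hx
  have hWP : ∀ w ∈ W, w ∈ polarDual P := fun w hw => by
    rw [hWdef]; exact subset_convexHull ℝ _ hw
  have hspec := fun b (hb : b ∈ B) => rootFacet_spec (hBroot b hb)
  have hval : ∀ b ∈ B, ∀ x ∈ P, -1 ≤ pairR (rootNormal P b) x := fun b hb => (hspec b hb).1.1
  have hFeq : ∀ b ∈ B, rootFacet P b = {x ∈ P | pairR (rootNormal P b) x = -1} :=
    fun b hb => (hspec b hb).1.2.1
  have hbF : ∀ b ∈ B, b ∈ rootFacet P b := fun b hb => intrinsicInterior_subset (hspec b hb).2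
  have hbP : ∀ b ∈ B, b ∈ P := fun b hb => by
    have h := hbF b hb; rw [hFeq b hb] at h; exact h.1
  have hbη : ∀ b ∈ B, pairR (rootNormal P b) b = -1 := fun b hb => by
    have h := hbF b hb; rw [hFeq b hb] at h; exact h.2
  have hcase : ∀ w ∈ W, ∀ b ∈ B, w = rootNormal P b ∨ 0 ≤ pairR w b := by
    intro w hw b hb
    obtain ⟨n, hn⟩ := pairR_int (hWlat w hw) (hBroot b hb).1
    have hge : -1 ≤ pairR w b := by
      have h := hWP w hw b (hbP b hb)
      rwa [pairR_comm] at h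
    by_cases h1 : pairR w b = -1
    · left
      exact normal_eq_of_tight (hspec b hb).1 (hspec b hb).2 w
        (fun x hx => by rw [pairR_comm]; exact hWP w hw x hx) h1
    · right
      rw [hn] at hge h1 ⊢
      have hge' : (-1 : ℤ) ≤ n := by exact_mod_cast hge
      have hne : n ≠ -1 := fun hc => h1 (by rw [hc]; norm_num)
      exact_mod_cast (by omega : (0:ℤ) ≤ n)
  set s : Fin d → ℝ := ∑ b ∈ B, b with hs
  have hs_eval : ∀ b₀ ∈ B, pairR (rootNormal P b₀) s = -1 := by
    intro b₀ hb₀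
    rw [hs, pairR_sum_right,
      Finset.sum_eq_single_of_mem b₀ hb₀ fun b hb hne => (horth b₀ hb₀ b hb (Ne.symm hne)).1]
    exact hbη b₀ hb₀
  have hws : ∀ w ∈ W, -1 ≤ pairR w s ∧ ((∀ b ∈ B, w ≠ rootNormal P b) → 0 ≤ pairR w s) := by
    intro w hw
    by_cases hex : ∃ b₀ ∈ B, w = rootNormal P b₀
    · obtain ⟨b₀, hb₀, rfl⟩ := hex
      exact ⟨(hs_eval b₀ hb₀).ge, fun h => absurd rfl (h b₀ hb₀)⟩
    · push_neg at hex
      have h0 : 0 ≤ pairR w s := by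
        rw [hs, pairR_sum_right]
        refine Finset.sum_nonneg fun b hb => ?_
        rcases hcase w hw b hb with h | h
        · exact absurd h (hex b hb)
        · exact h
      exact ⟨by linarith, fun _ => h0⟩
  have hsP : s ∈ P := hmemD s fun w hw => (hws w hw).1
  have hsF : ∀ b ∈ B, s ∈ rootFacet P b := fun b hb => by
    rw [hFeq b hb]; exact ⟨hsP, hs_eval b hb⟩
  have hsFF : s ∈ ⋂ b ∈ B, rootFacet P b := Set.mem_iInter₂.2 hsF
  set Φ : (Fin d → ℝ) →ₗ[ℝ] ({b // b ∈ B} → ℝ) :=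
    LinearMap.pi (fun b => pairLM (rootNormal P b.1)) with hΦ
  have hker : ∀ v : Fin d → ℝ,
      v ∈ LinearMap.ker Φ ↔ ∀ b ∈ B, pairR (rootNormal P b) v = 0 := by
    intro v
    rw [LinearMap.mem_ker, hΦ]
    constructor
    · intro h b hb
      have h2 := congrFun h ⟨b, hb⟩
      simpa [LinearMap.pi_apply] using h2
    · intro h; funext b; simpa [LinearMap.pi_apply] using h b.1 b.2
  have hrange : LinearMap.range Φ = ⊤ := by
    rw [Submodule.eq_top_iff']
    intro c
    refine ⟨∑ b : {b // b ∈ B}, c b • (-(b : Fin d → ℝ)), ?_⟩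
    funext b'
    rw [hΦ, LinearMap.pi_apply, pairLM_apply, pairR_sum_right,
      Finset.sum_eq_single_of_mem b' (Finset.mem_univ b') ?side]
    · rw [pairR_smul_right, pairR_neg_right, hbη b'.1 b'.2]; ring
    case side =>
      intro b _ hne
      have hne' : (b' : Fin d → ℝ) ≠ b := fun hval => hne (Subtype.ext hval.symm)
      rw [pairR_smul_right, pairR_neg_right, (horth b'.1 b'.2 b.1 b.2 hne').1]; ring
  have hrk : B.card + Module.finrank ℝ (LinearMap.ker Φ) = d := by
    have h := LinearMap.finrank_range_add_finrank_ker Φ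
    rwa [hrange, finrank_top, Module.finrank_fintype_fun_eq_card, Fintype.card_coe,
      Module.finrank_fin_fun] at h
  set M : ℝ := (∑ w ∈ W, (d : ℝ) * ‖w‖) + 1 with hM
  have hM0 : 0 < M := by
    have h : (0:ℝ) ≤ ∑ w ∈ W, (d : ℝ) * ‖w‖ :=
      Finset.sum_nonneg fun w _ => by positivity
    rw [hM]; linarith
  have hMb : ∀ w ∈ W, (d : ℝ) * ‖w‖ ≤ M := by
    intro w hw
    have h1 : (d:ℝ) * ‖w‖ ≤ ∑ w' ∈ W, (d:ℝ) * ‖w'‖ :=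
      Finset.single_le_sum (f := fun w' : Fin d → ℝ => (d:ℝ) * ‖w'‖)
        (fun w' _ => by positivity) hw
    rw [hM]; linarith
  have hball : ∀ v ∈ LinearMap.ker Φ, ‖v‖ < M⁻¹ → s + v ∈ ⋂ b ∈ B, rootFacet P b := by
    intro v hv hvn
    have hvk : ∀ b ∈ B, pairR (rootNormal P b) v = 0 := (hker v).1 hv
    have hsvP : s + v ∈ P := by
      refine hmemD _ fun w hw => ?_
      by_cases hex : ∃ b₀ ∈ B, w = rootNormal P b₀
      · obtain ⟨b₀, hb₀, rfl⟩ := hex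
        rw [pairR_add_right, hs_eval b₀ hb₀, hvk b₀ hb₀]; norm_num
      · push_neg at hex
        have h0 : 0 ≤ pairR w s := (hws w hw).2 hex
        have h1 := pairR_abs_le w v
        have h2 : (d:ℝ) * ‖w‖ * ‖v‖ < 1 := by
          have h3 : (d:ℝ) * ‖w‖ * ‖v‖ ≤ M * ‖v‖ :=
            mul_le_mul_of_nonneg_right (hMb w hw) (norm_nonneg v)
          have h4 : M * ‖v‖ < M * M⁻¹ := mul_lt_mul_of_pos_left hvn hM0
          rw [mul_inv_cancel₀ (ne_of_gt hM0)] at h4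
          linarith
        rw [pairR_add_right]
        have h5 := abs_le.1 h1
        linarith [h5.1]
    refine Set.mem_iInter₂.2 fun b hb => ?_
    rw [hFeq b hb]
    exact ⟨hsvP, by rw [pairR_add_right, hs_eval b hb, hvk b hb]; ring⟩
  have hFsub : ∀ x ∈ (⋂ b ∈ B, rootFacet P b), ∀ b ∈ B,
      pairR (rootNormal P b) x = -1 ∧ x ∈ P := by
    intro x hx b hb
    have h := Set.mem_iInter₂.1 hx b hb
    rw [hFeq b hb] at h
    exact ⟨h.2, h.1⟩
  have hVS : vectorSpan ℝ (⋂ b ∈ B, rootFacet P b) = LinearMap.ker Φ := by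
    apply le_antisymm
    · rw [vectorSpan_def, Submodule.span_le]
      intro u hu
      rw [Set.mem_vsub] at hu
      obtain ⟨x, hx, y, hy, rfl⟩ := hu
      have h : (x - y) ∈ LinearMap.ker Φ := (hker _).2 fun b hb => by
        rw [pairR_sub_right, (hFsub x hx b hb).1, (hFsub y hy b hb).1]; ring
      simpa [vsub_eq_sub] using h
    · intro v hv
      set c : ℝ := M⁻¹ / (2 * (‖v‖ + 1)) with hc
      have hc0 : 0 < c := by rw [hc]; positivity
      have h1 : ‖c • v‖ < M⁻¹ := small_smul_norm v (inv_pos.2 hM0)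
      have h2 : s + c • v ∈ ⋂ b ∈ B, rootFacet P b :=
        hball (c • v) (Submodule.smul_mem _ c hv) h1
      have h4 := vsub_mem_vectorSpan (k := ℝ) h2 hsFF
      have h5 : (s + c • v) -ᵥ s = c • v := by rw [vsub_eq_sub]; abel
      rw [h5] at h4
      have h6 : v = c⁻¹ • (c • v) := by
        rw [smul_smul, inv_mul_cancel₀ (ne_of_gt hc0), one_smul]
      rw [h6]
      exact Submodule.smul_mem _ _ h4
  have hdim : Module.finrank ℝ (vectorSpan ℝ (⋂ b ∈ B, rootFacet P b)) = d - B.card := by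
    rw [hVS]; omega
  have haff : s ∈ affineSpan ℝ (⋂ b ∈ B, rootFacet P b) := subset_affineSpan ℝ _ hsFF
  have hrelint : s ∈ intrinsicInterior ℝ (⋂ b ∈ B, rootFacet P b) := by
    rw [mem_intrinsicInterior]
    refine ⟨⟨s, haff⟩, ?_, rfl⟩
    rw [mem_interior_iff_mem_nhds, Metric.mem_nhds_iff]
    refine ⟨M⁻¹, inv_pos.2 hM0, ?_⟩
    rintro ⟨z, hz⟩ hzball
    rw [Metric.mem_ball, Subtype.dist_eq] at hzball
    have hdz : ‖z - s‖ < M⁻¹ := by rw [← dist_eq_norm]; exact hzball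
    have hzk : z - s ∈ LinearMap.ker Φ := by
      have h5 := AffineSubspace.vsub_mem_direction hz haff
      rw [direction_affineSpan, hVS] at h5
      simpa [vsub_eq_sub] using h5
    have h6 := hball (z - s) hzk hdz
    have h7 : s + (z - s) = z := by abel
    rw [h7] at h6
    exact h6
  have hlat : IsLatticePt s := by
    intro i
    rw [hs]
    have h : (∑ b ∈ B, b) i = ∑ b ∈ B, b i := by rw [Finset.sum_apply]
    rw [h]
    exact exists_int_sum B (fun b => b i) fun b hb => (hBroot b hb).1 i
  have hexp : IsExposed ℝ P (⋂ b ∈ B, rootFacet P b) := by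
    intro _
    refine ⟨LinearMap.toContinuousLinearMap (pairLM (-(∑ b ∈ B, rootNormal P b))), ?_⟩
    have hLval : ∀ x, (LinearMap.toContinuousLinearMap
        (pairLM (-(∑ b ∈ B, rootNormal P b)))) x
        = -∑ b ∈ B, pairR (rootNormal P b) x := by
      intro x
      rw [LinearMap.coe_toContinuousLinearMap', pairLM_apply, pairR_neg_left, pairR_sum_left]
    ext x
    simp only [Set.mem_setOf_eq]
    constructor
    · intro hx
      have hxall := fun b hb => hFsub x hx b hb
      obtain ⟨b₀, hb₀⟩ := hBne
      have hxP : x ∈ P := (hxall b₀ hb₀).2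
      refine ⟨hxP, fun y hy => ?_⟩
      rw [hLval, hLval]
      have h7 : ∑ b ∈ B, pairR (rootNormal P b) x = ∑ b ∈ B, (-1:ℝ) :=
        Finset.sum_congr rfl fun b hb => (hxall b hb).1
      have h8 : ∑ b ∈ B, (-1:ℝ) ≤ ∑ b ∈ B, pairR (rootNormal P b) y :=
        Finset.sum_le_sum fun b hb => hval b hb y hy
      linarith
    · rintro ⟨hxP, hmax⟩
      have h9 := hmax s hsP
      rw [hLval, hLval] at h9
      have h10 : ∑ b ∈ B, pairR (rootNormal P b) s = ∑ b ∈ B, (-1:ℝ) :=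
        Finset.sum_congr rfl fun b hb => hs_eval b hb
      have h11 : ∑ b ∈ B, pairR (rootNormal P b) x ≤ ∑ b ∈ B, (-1:ℝ) := by linarith
      have h12 : ∀ b ∈ B, pairR (rootNormal P b) x = -1 := by
        by_contra hcon
        push_neg at hcon
        obtain ⟨b₀, hb₀, hne⟩ := hcon
        have hgt : -1 < pairR (rootNormal P b₀) x :=
          lt_of_le_of_ne (hval b₀ hb₀ x hxP) (Ne.symm hne)
        have h13 : ∑ b ∈ B, (-1:ℝ) < ∑ b ∈ B, pairR (rootNormal P b) x :=
          Finset.sum_lt_sum (fun b hb => hval b hb x hxP) ⟨b₀, hb₀, hgt⟩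
        linarith
      exact Set.mem_iInter₂.2 fun b hb => by rw [hFeq b hb]; exact ⟨hxP, h12 b hb⟩
  exact ⟨⟨s, hsFF⟩, hexp, hdim, hlat, hrelint⟩
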